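/- arXiv:2410.02464 — 2 statements merged into one kernel-verified Lean document; each statement's English description precedes it below -/
import Mathlib

section
/- Let K ∈ ℕ and x1, x2, x3 ∈ ℝ≥0 with x1 ≡^K x2 ≡^K x3. Then the composition τ_{x2→x3} ∘ τ_{x1→x2} is identical to τ_{x1→x3} as a map on timestamps. -/
open scoped NNReal Classical

namespace IRTA

/-- A timestamp is a finite sequence of non-negative reals. -/
abbrev Timestamp : Type := List ℝ≥0

/-- A timed word is a finite sequence of (delay, letter) pairs. -/
abbrev TimedWord (A : Type) : Type := List (ℝ≥0 × A)

/-- Fractional part of a non-negative real. -/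
noncomputable def fracPart (x : ℝ≥0) : ℝ≥0 := x - (⌊x⌋₊ : ℝ≥0)

/-- `x` is a natural-number value. -/
def IsNatVal (x : ℝ≥0) : Prop := ∃ m : ℕ, x = (m : ℝ≥0)

/-- Region equivalence `≡^K`. -/
def RegEq (K : ℕ) (x y : ℝ≥0) : Prop :=
  (⌊x⌋₊ = ⌊y⌋₊ ∧ (fracPart x = 0 ↔ fracPart y = 0)) ∨ ((K : ℝ≥0) < x ∧ (K : ℝ≥0) < y)

/-- One step of the (greedy) clock evolution: reset whenever the value is an
integer between `0` and `K`. -/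
noncomputable def resetStep (K : ℕ) (v : ℝ≥0) : ℝ≥0 :=
  if ∃ m : ℕ, m ≤ K ∧ v = (m : ℝ≥0) then 0 else v

/-- Auxiliary function computing `c^K` with accumulator `v`. -/
noncomputable def cKAux (K : ℕ) : ℝ≥0 → Timestamp → ℝ≥0
  | v, [] => v
  | v, t :: d => cKAux K (resetStep K (v + t)) d

/-- `c^K(d)`: the sum of the delays after the last integral position of `d`. -/
noncomputable def cK (K : ℕ) (d : Timestamp) : ℝ≥0 := cKAux K 0 d

/-- `c^K` of a timed word is `c^K` of its timestamp. -/
noncomputable def cKW {A : Type} (K : ℕ) (w : TimedWord A) : ℝ≥0 :=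
  cK K (w.map Prod.fst)

/-- `c^K_⊤` : `c^K` truncated at `K`. -/
noncomputable def cKTop {A : Type} (K : ℕ) (w : TimedWord A) : WithTop ℝ≥0 :=
  if cKW K w ≤ (K : ℝ≥0) then ((cKW K w : ℝ≥0) : WithTop ℝ≥0) else ⊤

/-! ### Clock constraints and one-clock timed automata -/

/-- Clock constraints `φ ::= x < m | m < x | x = m | φ ∧ φ`. -/
inductive CC : Type where
  | lt : ℕ → CC
  | gt : ℕ → CC
  | eq : ℕ → CC
  | and : CC → CC → CC

/-- Satisfaction of a clock constraint by a clock value. -/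
def CC.sat : CC → ℝ≥0 → Prop
  | .lt m, x => x < (m : ℝ≥0)
  | .gt m, x => (m : ℝ≥0) < x
  | .eq m, x => x = (m : ℝ≥0)
  | .and φ ψ, x => φ.sat x ∧ ψ.sat x

/-- The largest constant appearing in a clock constraint. -/
def CC.maxConst : CC → ℕ
  | .lt m => m
  | .gt m => m
  | .eq m => m
  | .and φ ψ => max φ.maxConst ψ.maxConst

/-- A transition of a one-clock timed automaton; `reset = true` means the
clock is reset (the `r = 0` case). -/
structure TTrans (Q A : Type) where
  src : Q
  dst : Q
  lab : A
  guard : CC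
  reset : Bool

/-- A one-clock timed automaton. -/
structure TA (A : Type) where
  Q : Type
  init : Q
  final : Set Q
  trans : Set (TTrans Q A)

/-- The automaton has finitely many states and transitions. -/
def TA.IsFinite {A : Type} (M : TA A) : Prop := Finite M.Q ∧ M.trans.Finite

/-- Runs of a one-clock timed automaton between configurations. -/
inductive Steps {A : Type} (M : TA A) : M.Q × ℝ≥0 → TimedWord A → M.Q × ℝ≥0 → Prop
  | nil (c : M.Q × ℝ≥0) : Steps M c [] c
  | cons {q : M.Q} {ν t : ℝ≥0} {a : A} {w : TimedWord A} {c : M.Q × ℝ≥0}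
      (θ : TTrans M.Q A) (hθ : θ ∈ M.trans) (hsrc : θ.src = q) (hlab : θ.lab = a)
      (hg : θ.guard.sat (ν + t))
      (hrest : Steps M (θ.dst, if θ.reset then 0 else ν + t) w c) :
      Steps M (q, ν) ((t, a) :: w) c

/-- The language of `M` from a given configuration. -/
def TA.LangFrom {A : Type} (M : TA A) (c : M.Q × ℝ≥0) : Set (TimedWord A) :=
  {w | ∃ q' : M.Q, ∃ ν' : ℝ≥0, Steps M c w (q', ν') ∧ q' ∈ M.final}

/-- The language of `M` (from the initial configuration). -/
def TA.Lang {A : Type} (M : TA A) : Set (TimedWord A) := M.LangFrom (M.init, 0)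

/-- Determinism: distinct transitions with the same source and letter have
disjoint guards. -/
def TA.Deterministic {A : Type} (M : TA A) : Prop :=
  ∀ θ₁ ∈ M.trans, ∀ θ₂ ∈ M.trans, θ₁ ≠ θ₂ → θ₁.src = θ₂.src → θ₁.lab = θ₂.lab →
    ∀ x : ℝ≥0, ¬ (θ₁.guard.sat x ∧ θ₂.guard.sat x)

/-- Completeness: every timed word admits a run from the initial configuration. -/
def TA.Complete {A : Type} (M : TA A) : Prop :=
  ∀ w : TimedWord A, ∃ c : M.Q × ℝ≥0, Steps M (M.init, 0) w c

/-- A 1-IRTA: every resetting transition has an equality guard. -/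
def TA.IsIRTA {A : Type} (M : TA A) : Prop :=
  ∀ θ ∈ M.trans, θ.reset = true → ∃ m : ℕ, θ.guard = CC.eq m

/-- Guards allowed in a strict 1-IRTA with constant `K`. -/
def StrictGuard (K : ℕ) (φ : CC) : Prop :=
  (∃ m : ℕ, φ = CC.eq m) ∨ (∃ m : ℕ, φ = CC.and (CC.gt m) (CC.lt (m + 1))) ∨ φ = CC.gt K

/-- Strictness with constant `K`: every guard is of one of the allowed forms
and a guard is an equality iff the transition resets. -/
def TA.IsStrict {A : Type} (M : TA A) (K : ℕ) : Prop :=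
  ∀ θ ∈ M.trans, StrictGuard K θ.guard ∧ ((∃ m : ℕ, θ.guard = CC.eq m) ↔ θ.reset = true)

/-- All constants appearing in guards are at most `K`. -/
def TA.MaxConstLE {A : Type} (M : TA A) (K : ℕ) : Prop :=
  ∀ θ ∈ M.trans, θ.guard.maxConst ≤ K

/-- `M` reaches the same control state on reading `u` and `v` from the initial
configuration. -/
def TA.SameState {A : Type} (M : TA A) (u v : TimedWord A) : Prop :=
  ∃ q : M.Q, ∃ ν ν' : ℝ≥0, Steps M (M.init, 0) u (q, ν) ∧ Steps M (M.init, 0) v (q, ν')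

/-- A `K`-acceptor. -/
def IsKAcceptor {A : Type} (M : TA A) (K : ℕ) : Prop :=
  M.IsFinite ∧ M.Complete ∧ M.Deterministic ∧ M.IsIRTA ∧ M.IsStrict K ∧ M.MaxConstLE K ∧
    ∀ u v : TimedWord A, M.SameState u v → RegEq K (cKW K u) (cKW K v)

/-! ### Equivalences on timed words -/

/-- `L`-preservation of a relation on timed words. -/
def LPreserving {A : Type} (L : Set (TimedWord A)) (r : TimedWord A → TimedWord A → Prop) :
    Prop :=
  ∀ u v : TimedWord A, r u v → (u ∈ L ↔ v ∈ L)

/-- `K`-monotonicity of a relation on timed words. -/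
def KMonotonic {A : Type} (K : ℕ) (r : TimedWord A → TimedWord A → Prop) : Prop :=
  ∀ u v : TimedWord A, r u v →
    RegEq K (cKW K u) (cKW K v) ∧
      ∀ (a : A) (t t' : ℝ≥0), RegEq K (cKW K u + t) (cKW K v + t') →
        r (u ++ [(t, a)]) (v ++ [(t', a)])

/-- Finite index: there are finitely many classes `{v | r u v}`. -/
def FiniteIndex {A : Type} (r : TimedWord A → TimedWord A → Prop) : Prop :=
  Set.Finite (Set.range fun u : TimedWord A => {v : TimedWord A | r u v})

/-! ### The rescaling maps -/

/-- The bijection `f_{λ→λ'}` of the open unit interval. -/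
noncomputable def fScale (lam lam' t : ℝ≥0) : ℝ≥0 :=
  if t ≤ lam then (lam' / lam) * t else lam' + ((1 - lam') / (1 - lam)) * (t - lam)

/-- The new delay `t'` computed from the current clock values `y, y'` and delay `t`. -/
noncomputable def tauStep (K : ℕ) (y y' t : ℝ≥0) : ℝ≥0 :=
  if (IsNatVal y ∧ IsNatVal y') ∨ ((K : ℝ≥0) < y ∧ (K : ℝ≥0) < y') then t
  else (⌊t⌋₊ : ℝ≥0) + fScale (1 - fracPart y) (1 - fracPart y') (fracPart t)

/-- Auxiliary rescaling map on timestamps, carrying the current clock values. -/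
noncomputable def tauAux (K : ℕ) : ℝ≥0 → ℝ≥0 → Timestamp → Timestamp
  | _, _, [] => []
  | y, y', t :: d =>
      tauStep K y y' t ::
        tauAux K (resetStep K (y + t)) (resetStep K (y' + tauStep K y y' t)) d

/-- The rescaling map `τ_{x→x'}` on timestamps. -/
noncomputable def tau (K : ℕ) (x x' : ℝ≥0) (d : Timestamp) : Timestamp :=
  tauAux K (resetStep K x) (resetStep K x') d

/-- Auxiliary rescaling map on timed words. -/
noncomputable def tauWAux {A : Type} (K : ℕ) : ℝ≥0 → ℝ≥0 → TimedWord A → TimedWord A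
  | _, _, [] => []
  | y, y', (t, a) :: w =>
      (tauStep K y y' t, a) ::
        tauWAux K (resetStep K (y + t)) (resetStep K (y' + tauStep K y y' t)) w

/-- The rescaling map `τ_{x→x'}` on timed words. -/
noncomputable def tauW {A : Type} (K : ℕ) (x x' : ℝ≥0) (w : TimedWord A) : TimedWord A :=
  tauWAux K (resetStep K x) (resetStep K x') w

/-! ### Residuals and the syntactic equivalence -/

/-- The residual language `u^{-1}L`. -/
def residual {A : Type} (L : Set (TimedWord A)) (u : TimedWord A) : Set (TimedWord A) :=
  {w : TimedWord A | u ++ w ∈ L}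

/-- The syntactic equivalence `≈^{L,K}`. -/
def ApproxLK {A : Type} (L : Set (TimedWord A)) (K : ℕ) (u v : TimedWord A) : Prop :=
  RegEq K (cKW K u) (cKW K v) ∧
    (tauW K (cKW K u) (cKW K v)) '' (residual L u) = residual L v

/-! ### The automaton built from a monotonic equivalence -/

/-- The region guard `φ([t])`. -/
noncomputable def phiOf (K : ℕ) (t : ℝ≥0) : CC :=
  if t ≤ (K : ℝ≥0) then
    (if IsNatVal t then CC.eq ⌊t⌋₊ else CC.and (CC.gt ⌊t⌋₊) (CC.lt (⌊t⌋₊ + 1)))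
  else CC.gt K

/-- The automaton `A_≈` built from an equivalence `s` on timed words. -/
noncomputable def Aapprox {A : Type} (L : Set (TimedWord A)) (K : ℕ)
    (s : Setoid (TimedWord A)) : TA A where
  Q := Quotient s
  init := Quotient.mk s ([] : TimedWord A)
  final := {q : Quotient s | ∃ u : TimedWord A, q = Quotient.mk s u ∧ u ∈ L}
  trans := {θ : TTrans (Quotient s) A |
    ∃ (u : TimedWord A) (a : A) (t : ℝ≥0),
      θ.src = Quotient.mk s u ∧ θ.dst = Quotient.mk s (u ++ [(t, a)]) ∧ θ.lab = a ∧
      θ.guard = phiOf K (cKW K u + t) ∧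
      (θ.reset = true ↔ ∃ m : ℕ, m ≤ K ∧ cKW K u + t = (m : ℝ≥0))}

/-! ### Half-integral and small words -/

/-- Every delay has fractional part `0` or `1/2`. -/
def HalfIntegral {A : Type} (w : TimedWord A) : Prop :=
  ∀ p ∈ w, fracPart p.1 = 0 ∨ fracPart p.1 = 1 / 2

/-- Every delay is `< K + 1`. -/
def SmallWord {A : Type} (K : ℕ) (w : TimedWord A) : Prop :=
  ∀ p ∈ w, p.1 < (K : ℝ≥0) + 1

/-- The delays of `Σ_K`: half-integral values `≤ K + 1/2`. -/
def IsSigmaK (K : ℕ) (t : ℝ≥0) : Prop :=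
  (fracPart t = 0 ∨ fracPart t = 1 / 2) ∧ t ≤ (K : ℝ≥0) + 1 / 2

/-- Words over `Σ_K` (small half-integral words). -/
def SigmaWord {A : Type} (K : ℕ) (w : TimedWord A) : Prop :=
  ∀ p ∈ w, IsSigmaK K p.1



/-! ### `K`-acceptors with their region representatives -/

/-- A `K`-acceptor bundled with the half-integral representative of the
unique region of each state. -/
structure KAcc (A : Type) (K : ℕ) where
  M : TA A
  acc : IsKAcceptor M K
  reg : M.Q → ℝ≥0
  regHalf : ∀ q : M.Q, fracPart (reg q) = 0 ∨ fracPart (reg q) = 1 / 2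
  regLe : ∀ q : M.Q, reg q ≤ (K : ℝ≥0) + 1 / 2
  regSpec : ∀ (w : TimedWord A) (q : M.Q) (x : ℝ≥0),
    Steps M (M.init, 0) w (q, x) → RegEq K x (reg q)

/-- The minimization equivalences `∼^i` on the states of a `K`-acceptor. -/
def simEq {A : Type} {K : ℕ} (B : KAcc A K) : ℕ → B.M.Q → B.M.Q → Prop
  | 0, p, q => B.reg p = B.reg q ∧ (p ∈ B.M.final ↔ q ∈ B.M.final)
  | i + 1, p, q => simEq B i p q ∧
      ∀ (t : ℝ≥0) (a : A), IsSigmaK K t →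
        ∀ θ₁ θ₂ : TTrans B.M.Q A, θ₁ ∈ B.M.trans → θ₂ ∈ B.M.trans →
          θ₁.src = p → θ₂.src = q → θ₁.lab = a → θ₂.lab = a →
          θ₁.guard = phiOf K t → θ₂.guard = phiOf K t →
          simEq B i θ₁.dst θ₂.dst

/-- The quotient automaton `B/∼^m`. -/
noncomputable def quotTA {A : Type} {K : ℕ} (B : KAcc A K) (m : ℕ) : TA A where
  Q := Quot (simEq B m)
  init := Quot.mk (simEq B m) B.M.init
  final := {c : Quot (simEq B m) | ∃ q ∈ B.M.final, c = Quot.mk (simEq B m) q}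
  trans := {θ : TTrans (Quot (simEq B m)) A |
    ∃ θ₀ ∈ B.M.trans,
      θ.src = Quot.mk (simEq B m) θ₀.src ∧ θ.dst = Quot.mk (simEq B m) θ₀.dst ∧
      θ.lab = θ₀.lab ∧ θ.guard = θ₀.guard ∧ θ.reset = θ₀.reset}

/-! ### Observation tables -/

/-- An observation table over `Σ_K`. -/
structure ObsTable (A : Type) (K : ℕ) where
  U1 : Set (TimedWord A)
  E : Set (TimedWord A)
  val : TimedWord A → TimedWord A → Bool
  U1fin : U1.Finite
  Efin : E.Finite
  U1sigma : ∀ u ∈ U1, SigmaWord K u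
  Esigma : ∀ e ∈ E, SigmaWord K e
  epsU1 : ([] : TimedWord A) ∈ U1
  prefixClosed : ∀ (u : TimedWord A) (x : ℝ≥0 × A), u ++ [x] ∈ U1 → u ∈ U1
  epsE : ([] : TimedWord A) ∈ E
  suffixClosed : ∀ (x : ℝ≥0 × A) (e : TimedWord A), x :: e ∈ E → e ∈ E

/-- The set `U2` of one-letter `Σ_K`-extensions of `U1`. -/
def obsU2 {A : Type} {K : ℕ} (T : ObsTable A K) : Set (TimedWord A) :=
  {w : TimedWord A | ∃ u ∈ T.U1, ∃ (t : ℝ≥0) (a : A), IsSigmaK K t ∧ w = u ++ [(t, a)]}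

/-- `R(u)`: the row of `u` (restricted to `E`) together with `c^K_⊤(u)`. -/
noncomputable def Rof {A : Type} {K : ℕ} (T : ObsTable A K) (u : TimedWord A) :
    ({e : TimedWord A // e ∈ T.E} → Bool) × WithTop ℝ≥0 :=
  (fun e => T.val u e.1, cKTop K u)

/-- The table is closed. -/
def ObsTable.Closed {A : Type} {K : ℕ} (T : ObsTable A K) : Prop :=
  ∀ w ∈ obsU2 T, ∃ u ∈ T.U1, Rof T w = Rof T u

/-- The table is consistent. -/
def ObsTable.Consistent {A : Type} {K : ℕ} (T : ObsTable A K) : Prop :=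
  ∀ u ∈ T.U1, ∀ w ∈ T.U1, Rof T u = Rof T w →
    ∀ (t : ℝ≥0) (a : A), IsSigmaK K t → Rof T (u ++ [(t, a)]) = Rof T (w ++ [(t, a)])

/-- The automaton `A_𝒯` induced by a (closed and consistent) observation table. -/
noncomputable def ATable {A : Type} {K : ℕ} (T : ObsTable A K) : TA A where
  Q := {f : ({e : TimedWord A // e ∈ T.E} → Bool) × WithTop ℝ≥0 // ∃ u ∈ T.U1, f = Rof T u}
  init := ⟨Rof T [], ⟨[], T.epsU1, rfl⟩⟩
  final := {q | ∃ u ∈ T.U1, q.1 = Rof T u ∧ T.val u [] = true}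
  trans := {θ | ∃ u ∈ T.U1, ∃ (t : ℝ≥0) (a : A), IsSigmaK K t ∧
      θ.src.1 = Rof T u ∧ θ.dst.1 = Rof T (u ++ [(t, a)]) ∧ θ.lab = a ∧
      θ.guard = phiOf K (cKW K u + t) ∧
      (θ.reset = true ↔ ∃ m : ℕ, m ≤ K ∧ cKW K u + t = (m : ℝ≥0))}

/-- A `K`-acceptor is consistent with the observation table `𝒯`. -/
def ConsistentWith {A : Type} {K : ℕ} (M : TA A) (T : ObsTable A K) : Prop :=
  ∀ w : TimedWord A, (w ∈ T.U1 ∨ w ∈ obsU2 T) → ∀ e ∈ T.E,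
    ∀ (q : M.Q) (ν : ℝ≥0), Steps M (M.init, 0) (w ++ e) (q, ν) →
      (q ∈ M.final ↔ T.val w e = true)

/-- Isomorphism of one-clock timed automata. -/
structure TAIso {A : Type} (M N : TA A) where
  toEquiv : M.Q ≃ N.Q
  init_eq : toEquiv M.init = N.init
  final_iff : ∀ q : M.Q, q ∈ M.final ↔ toEquiv q ∈ N.final
  trans_iff : ∀ θ : TTrans M.Q A,
    θ ∈ M.trans ↔
      (⟨toEquiv θ.src, toEquiv θ.dst, θ.lab, θ.guard, θ.reset⟩ : TTrans N.Q A) ∈ N.trans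


lemma floor_add_fracPart (x : ℝ≥0) : (⌊x⌋₊ : ℝ≥0) + fracPart x = x :=
  add_tsub_cancel_of_le (Nat.floor_le (zero_le : 0 ≤ x))

lemma fracPart_lt_one (x : ℝ≥0) : fracPart x < 1 := by
  rw [fracPart, tsub_lt_iff_left (Nat.floor_le (zero_le : 0 ≤ x))]
  exact Nat.lt_floor_add_one x

lemma fracPart_le_one (x : ℝ≥0) : fracPart x ≤ 1 := (fracPart_lt_one x).le

lemma isNatVal_iff (x : ℝ≥0) : IsNatVal x ↔ fracPart x = 0 := by
  constructor
  · rintro ⟨m, rfl⟩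
    simp [fracPart]
  · intro h
    exact ⟨⌊x⌋₊, le_antisymm (tsub_eq_zero_iff_le.mp h) (Nat.floor_le (zero_le : 0 ≤ x))⟩

lemma floor_decomp (n : ℕ) (v : ℝ≥0) (hv : v < 1) : ⌊(n : ℝ≥0) + v⌋₊ = n := by
  rw [Nat.floor_eq_iff zero_le]
  exact ⟨le_add_right le_rfl, by push_cast; exact (add_lt_add_iff_left _).mpr hv⟩

lemma frac_decomp (n : ℕ) (v : ℝ≥0) (hv : v < 1) : fracPart ((n : ℝ≥0) + v) = v := by
  rw [fracPart, floor_decomp n v hv, add_tsub_cancel_left]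

lemma lt_iff_le_floor {K : ℕ} {x : ℝ≥0} (h : fracPart x ≠ 0) :
    (K : ℝ≥0) < x ↔ K ≤ ⌊x⌋₊ := by
  constructor
  · intro hK
    exact Nat.le_floor hK.le
  · intro hK
    have h1 : (K : ℝ≥0) ≤ ⌊x⌋₊ := by exact_mod_cast hK
    have h2 : (⌊x⌋₊ : ℝ≥0) < x := by
      rcases lt_or_eq_of_le (Nat.floor_le (zero_le : 0 ≤ x)) with h' | h'
      · exact h'
      · exact absurd (tsub_eq_zero_iff_le.mpr h'.ge) h
    exact lt_of_le_of_lt h1 h2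

/-- The `C` condition of `tauStep`. -/
abbrev Cnd (K : ℕ) (y y' : ℝ≥0) : Prop :=
  (IsNatVal y ∧ IsNatVal y') ∨ ((K : ℝ≥0) < y ∧ (K : ℝ≥0) < y')

/-- The complementary "both clocks have nonzero fractional part and are ≤ K" case. -/
abbrev Dnd (K : ℕ) (y y' : ℝ≥0) : Prop :=
  ⌊y⌋₊ = ⌊y'⌋₊ ∧ ¬ (K : ℝ≥0) < y ∧ ¬ (K : ℝ≥0) < y' ∧ fracPart y ≠ 0 ∧ fracPart y' ≠ 0

lemma Dnd_not_cnd {K : ℕ} {y y' : ℝ≥0} (h : Dnd K y y') : ¬ Cnd K y y' := by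
  rintro (⟨h1, _⟩ | ⟨h1, _⟩)
  · exact h.2.2.2.1 ((isNatVal_iff y).mp h1)
  · exact h.2.1 h1

lemma regEq_cnd_or_dnd {K : ℕ} {y y' : ℝ≥0} (h : RegEq K y y') : Cnd K y y' ∨ Dnd K y y' := by
  rcases h with ⟨hfl, hfr⟩ | h
  · by_cases h0 : fracPart y = 0
    · exact Or.inl (Or.inl ⟨(isNatVal_iff y).mpr h0, (isNatVal_iff y').mpr (hfr.mp h0)⟩)
    · have h0' : fracPart y' ≠ 0 := fun c => h0 (hfr.mpr c)
      by_cases hK : (K : ℝ≥0) < y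
      · exact Or.inl (Or.inr ⟨hK, (lt_iff_le_floor h0').mpr (hfl ▸ (lt_iff_le_floor h0).mp hK)⟩)
      · have hK' : ¬ (K : ℝ≥0) < y' := fun c =>
          hK ((lt_iff_le_floor h0).mpr (hfl ▸ (lt_iff_le_floor h0').mp c))
        exact Or.inr ⟨hfl, hK, hK', h0, h0'⟩
  · exact Or.inl (Or.inr h)

lemma tauStep_pos {K : ℕ} {y y' : ℝ≥0} (h : Cnd K y y') (t : ℝ≥0) : tauStep K y y' t = t := by
  rw [tauStep, if_pos h]

lemma tauStep_neg {K : ℕ} {y y' : ℝ≥0} (h : ¬ Cnd K y y') (t : ℝ≥0) :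
    tauStep K y y' t = (⌊t⌋₊ : ℝ≥0) + fScale (1 - fracPart y) (1 - fracPart y') (fracPart t) := by
  rw [tauStep, if_neg h]

/-- The CD trichotomy for a chain. -/
lemma cd_chain {K : ℕ} {y1 y2 y3 : ℝ≥0} (h12 : RegEq K y1 y2) (h23 : RegEq K y2 y3) :
    (Cnd K y1 y2 ∧ Cnd K y2 y3 ∧ Cnd K y1 y3) ∨ (Dnd K y1 y2 ∧ Dnd K y2 y3 ∧ Dnd K y1 y3) := by
  rcases regEq_cnd_or_dnd h12 with hc | hd
  · left
    have hc23 : Cnd K y2 y3 := by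
      rcases regEq_cnd_or_dnd h23 with hc' | hd'
      · exact hc'
      · exfalso
        rcases hc with ⟨_, hN2⟩ | ⟨_, hK2⟩
        · exact hd'.2.2.2.1 ((isNatVal_iff y2).mp hN2)
        · exact hd'.2.1 hK2
    refine ⟨hc, hc23, ?_⟩
    rcases hc with ⟨hN1, hN2⟩ | ⟨hK1, hK2⟩
    · rcases hc23 with ⟨_, hN3⟩ | ⟨hK2, hK3⟩
      · exact Or.inl ⟨hN1, hN3⟩
      · -- y1 natural; show K < y1 from RegEq12
        right
        refine ⟨?_, hK3⟩
        rcases h12 with ⟨hfl, _⟩ | ⟨hK1, _⟩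
        · -- y2 = floor y2 and floor y1 = floor y2, y1 ≥ floor y1
          have h2 : (⌊y2⌋₊ : ℝ≥0) = y2 := by
            rcases hN2 with ⟨m, rfl⟩; simp
          calc (K : ℝ≥0) < y2 := hK2
            _ = (⌊y2⌋₊ : ℝ≥0) := h2.symm
            _ = (⌊y1⌋₊ : ℝ≥0) := by rw [hfl]
            _ ≤ y1 := Nat.floor_le (zero_le : 0 ≤ y1)
        · exact hK1
    · rcases hc23 with ⟨hN2, hN3⟩ | ⟨_, hK3⟩
      · right
        refine ⟨hK1, ?_⟩
        rcases h23 with ⟨hfl, _⟩ | ⟨_, hK3⟩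
        · have h2 : (⌊y2⌋₊ : ℝ≥0) = y2 := by
            rcases hN2 with ⟨m, rfl⟩; simp
          have h3 : (⌊y3⌋₊ : ℝ≥0) = y3 := by
            rcases hN3 with ⟨m, rfl⟩; simp
          calc (K : ℝ≥0) < y2 := hK2
            _ = (⌊y2⌋₊ : ℝ≥0) := h2.symm
            _ = (⌊y3⌋₊ : ℝ≥0) := by rw [hfl]
            _ = y3 := h3
        · exact hK3
      · exact Or.inr ⟨hK1, hK3⟩
  · right
    have hd23 : Dnd K y2 y3 := by
      rcases h23 with ⟨hfl, hfr⟩ | ⟨hK2, _⟩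
      · have h3 : fracPart y3 ≠ 0 := fun c => hd.2.2.2.2 (hfr.mpr c)
        refine ⟨hfl, hd.2.2.1, ?_, hd.2.2.2.2, h3⟩
        intro c
        exact hd.2.2.1 ((lt_iff_le_floor hd.2.2.2.2).mpr (hfl ▸ (lt_iff_le_floor h3).mp c))
      · exact absurd hK2 hd.2.2.1
    exact ⟨hd, hd23, ⟨hd.1.trans hd23.1, hd.2.1, hd23.2.2.1, hd.2.2.2.1, hd23.2.2.2.2⟩⟩

lemma div_mul_div_key {a b c : ℝ≥0} (hb : b ≠ 0) : a / b * (b / c) = a / c := by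
  rw [div_mul_div_comm, mul_comm a b, mul_div_mul_left _ _ hb]

lemma fScale_left {lam lam' s : ℝ≥0} (h : s ≤ lam) : fScale lam lam' s = lam' / lam * s :=
  if_pos h

lemma fScale_right {lam lam' s : ℝ≥0} (h : ¬ s ≤ lam) :
    fScale lam lam' s = lam' + (1 - lam') / (1 - lam) * (s - lam) := if_neg h

lemma fScale_le_of_le {lam lam' s : ℝ≥0} (hlam : lam ≠ 0) (h : s ≤ lam) :
    fScale lam lam' s ≤ lam' := by
  rw [fScale_left h]
  calc lam' / lam * s ≤ lam' / lam * lam := by gcongr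
    _ = lam' := div_mul_cancel₀ lam' hlam

lemma fScale_lt_of_lt {lam lam' s : ℝ≥0} (hlam : 0 < lam) (hlam' : 0 < lam') (h : s < lam) :
    fScale lam lam' s < lam' := by
  rw [fScale_left h.le]
  calc lam' / lam * s < lam' / lam * lam :=
        mul_lt_mul_of_pos_left h (div_pos hlam' hlam)
    _ = lam' := div_mul_cancel₀ lam' hlam.ne'

lemma fScale_self {lam lam' : ℝ≥0} (hlam : lam ≠ 0) : fScale lam lam' lam = lam' := by
  rw [fScale_left le_rfl, div_mul_cancel₀ lam' hlam]

lemma fScale_gt_of_gt {lam lam' s : ℝ≥0} (hlam1 : lam < 1) (hlam' : lam' < 1) (h : lam < s) :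
    lam' < fScale lam lam' s := by
  rw [fScale_right (not_le.mpr h)]
  exact lt_add_of_pos_right _
    (mul_pos (div_pos (tsub_pos_of_lt hlam') (tsub_pos_of_lt hlam1)) (tsub_pos_of_lt h))

lemma fScale_lt_one {lam lam' s : ℝ≥0} (hlam0 : 0 < lam) (hlam1 : lam < 1)
    (hlam'1 : lam' < 1) (hs : s < 1) : fScale lam lam' s < 1 := by
  by_cases h : s ≤ lam
  · exact lt_of_le_of_lt (fScale_le_of_le hlam0.ne' h) hlam'1
  · rw [fScale_right h]
    have h1 : s - lam < 1 - lam := by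
      rw [tsub_lt_tsub_iff_right (le_of_not_ge h)]
      exact hs
    calc lam' + (1 - lam') / (1 - lam) * (s - lam)
        < lam' + (1 - lam') / (1 - lam) * (1 - lam) :=
          (add_lt_add_iff_left _).mpr (mul_lt_mul_of_pos_left h1
            (div_pos (tsub_pos_of_lt hlam'1) (tsub_pos_of_lt hlam1)))
      _ = lam' + (1 - lam') := by rw [div_mul_cancel₀ _ (tsub_pos_of_lt hlam1).ne']
      _ = 1 := add_tsub_cancel_of_le hlam'1.le

lemma fScale_comp {lam1 lam2 lam3 s : ℝ≥0} (h1 : 0 < lam1) (h1' : lam1 < 1)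
    (h2 : 0 < lam2) (h2' : lam2 < 1) :
    fScale lam2 lam3 (fScale lam1 lam2 s) = fScale lam1 lam3 s := by
  by_cases h : s ≤ lam1
  · have hin : lam2 / lam1 * s ≤ lam2 := by
      calc lam2 / lam1 * s ≤ lam2 / lam1 * lam1 := by gcongr
        _ = lam2 := div_mul_cancel₀ lam2 h1.ne'
    rw [fScale_left h, fScale_left hin, fScale_left h, ← mul_assoc,
      div_mul_div_key h2.ne']
  · have hin : ¬ (lam2 + (1 - lam2) / (1 - lam1) * (s - lam1) ≤ lam2) :=
      not_le.mpr (lt_add_of_pos_right _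
        (mul_pos (div_pos (tsub_pos_of_lt h2') (tsub_pos_of_lt h1'))
          (tsub_pos_of_lt (not_le.mp h))))
    rw [fScale_right h, fScale_right hin, fScale_right h, add_tsub_cancel_left,
      ← mul_assoc, div_mul_div_key (tsub_pos_of_lt h2').ne']

lemma regEq_refl {K : ℕ} (x : ℝ≥0) : RegEq K x x := Or.inl ⟨rfl, Iff.rfl⟩

lemma one_sub_frac_pos (x : ℝ≥0) : 0 < 1 - fracPart x := tsub_pos_of_lt (fracPart_lt_one x)

lemma one_sub_frac_lt_one {x : ℝ≥0} (h : fracPart x ≠ 0) : 1 - fracPart x < 1 :=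
  tsub_lt_self one_pos (pos_iff_ne_zero.mpr h)

lemma frac_add_one_sub_frac (x : ℝ≥0) : fracPart x + (1 - fracPart x) = 1 := by
  rw [add_tsub_cancel_of_le (fracPart_le_one x)]

lemma one_sub_one_sub_frac (x : ℝ≥0) : 1 - (1 - fracPart x) = fracPart x :=
  tsub_tsub_cancel_of_le (fracPart_le_one x)

lemma resetStep_of_frac_ne {K : ℕ} {v : ℝ≥0} (h : fracPart v ≠ 0) : resetStep K v = v := by
  rw [resetStep, if_neg]
  rintro ⟨m, _, rfl⟩
  exact h (by simp [fracPart])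

lemma resetStep_of_gt {K : ℕ} {v : ℝ≥0} (h : (K : ℝ≥0) < v) : resetStep K v = v := by
  rw [resetStep, if_neg]
  rintro ⟨m, hm, rfl⟩
  exact absurd h (not_lt.mpr (by exact_mod_cast hm))

lemma tauStep_comp {K : ℕ} {y1 y2 y3 : ℝ≥0} (h12 : RegEq K y1 y2) (h23 : RegEq K y2 y3)
    (t : ℝ≥0) : tauStep K y2 y3 (tauStep K y1 y2 t) = tauStep K y1 y3 t := by
  rcases cd_chain h12 h23 with ⟨c12, c23, c13⟩ | ⟨d12, d23, d13⟩
  · rw [tauStep_pos c12, tauStep_pos c23, tauStep_pos c13]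
  · rw [tauStep_neg (Dnd_not_cnd d12), tauStep_neg (Dnd_not_cnd d23),
      tauStep_neg (Dnd_not_cnd d13)]
    have hv : fScale (1 - fracPart y1) (1 - fracPart y2) (fracPart t) < 1 :=
      fScale_lt_one (one_sub_frac_pos y1) (one_sub_frac_lt_one d12.2.2.2.1)
        (one_sub_frac_lt_one d12.2.2.2.2) (fracPart_lt_one t)
    rw [frac_decomp _ _ hv, floor_decomp _ _ hv,
      fScale_comp (one_sub_frac_pos y1) (one_sub_frac_lt_one d12.2.2.2.1)
        (one_sub_frac_pos y2) (one_sub_frac_lt_one d12.2.2.2.2)]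

lemma add_repr (y t : ℝ≥0) :
    y + t = ((⌊y⌋₊ + ⌊t⌋₊ : ℕ) : ℝ≥0) + (fracPart y + fracPart t) := by
  conv_lhs => rw [← floor_add_fracPart y, ← floor_add_fracPart t]
  push_cast
  ring

lemma regEq_resetStep_add {K : ℕ} {y1 y2 : ℝ≥0} (h : RegEq K y1 y2) (t : ℝ≥0) :
    RegEq K (resetStep K (y1 + t)) (resetStep K (y2 + tauStep K y1 y2 t)) := by
  rcases regEq_cnd_or_dnd h with hc | hd
  · rw [tauStep_pos hc]
    have hgt : (K : ℝ≥0) < y1 ∧ (K : ℝ≥0) < y2 → RegEq K (resetStep K (y1 + t)) (resetStep K (y2 + t)) := by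
      rintro ⟨hK1, hK2⟩
      have h1 : (K : ℝ≥0) < y1 + t := lt_of_lt_of_le hK1 (le_add_right le_rfl)
      have h2 : (K : ℝ≥0) < y2 + t := lt_of_lt_of_le hK2 (le_add_right le_rfl)
      rw [resetStep_of_gt h1, resetStep_of_gt h2]
      exact Or.inr ⟨h1, h2⟩
    rcases hc with ⟨hN1, hN2⟩ | hKs
    · rcases h with ⟨hfl, _⟩ | hKs
      · have hy : y1 = y2 := by
          obtain ⟨m, rfl⟩ := hN1
          obtain ⟨m', rfl⟩ := hN2
          simpa using hfl
        rw [hy]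
        exact regEq_refl _
      · exact hgt hKs
    · exact hgt hKs
  · rw [tauStep_neg (Dnd_not_cnd hd)]
    obtain ⟨hfl, _, _, hf1, hf2⟩ := hd
    set μ1 := fracPart y1 with hμ1
    set μ2 := fracPart y2 with hμ2
    set s := fracPart t with hs
    have hrepr1 : y1 + t = ((⌊y1⌋₊ + ⌊t⌋₊ : ℕ) : ℝ≥0) + (μ1 + s) := add_repr y1 t
    have hrepr2 : y2 + ((⌊t⌋₊ : ℝ≥0) + fScale (1 - μ1) (1 - μ2) s)
        = ((⌊y2⌋₊ + ⌊t⌋₊ : ℕ) : ℝ≥0) + (μ2 + fScale (1 - μ1) (1 - μ2) s) := by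
      conv_lhs => rw [← floor_add_fracPart y2]
      push_cast
      ring
    rcases lt_trichotomy s (1 - μ1) with hcase | hcase | hcase
    · -- no integer boundary crossed
      have hv2 : fScale (1 - μ1) (1 - μ2) s < 1 - μ2 :=
        fScale_lt_of_lt (one_sub_frac_pos y1) (one_sub_frac_pos y2) hcase
      have h1lt : μ1 + s < 1 := by
        calc μ1 + s < μ1 + (1 - μ1) := (add_lt_add_iff_left _).mpr hcase
          _ = 1 := frac_add_one_sub_frac y1
      have h2lt : μ2 + fScale (1 - μ1) (1 - μ2) s < 1 := by
        calc μ2 + fScale (1 - μ1) (1 - μ2) s < μ2 + (1 - μ2) := (add_lt_add_iff_left _).mpr hv2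
          _ = 1 := frac_add_one_sub_frac y2
      have hne1 : fracPart (y1 + t) ≠ 0 := by
        rw [hrepr1, frac_decomp _ _ h1lt]
        simp only [ne_eq, add_eq_zero]
        tauto
      have hne2 : fracPart (y2 + ((⌊t⌋₊ : ℝ≥0) + fScale (1 - μ1) (1 - μ2) s)) ≠ 0 := by
        rw [hrepr2, frac_decomp _ _ h2lt]
        simp only [ne_eq, add_eq_zero]
        tauto
      rw [resetStep_of_frac_ne hne1, resetStep_of_frac_ne hne2]
      left
      refine ⟨?_, by rw [hrepr1, frac_decomp _ _ h1lt, hrepr2, frac_decomp _ _ h2lt]; simp only [ne_eq, add_eq_zero]; tauto⟩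
      rw [hrepr1, floor_decomp _ _ h1lt, hrepr2, floor_decomp _ _ h2lt, hfl]
    · -- exactly hitting an integer
      have hveq : fScale (1 - μ1) (1 - μ2) s = 1 - μ2 := by
        rw [hcase]
        exact fScale_self (one_sub_frac_pos y1).ne'
      have he1 : y1 + t = ((⌊y1⌋₊ + ⌊t⌋₊ + 1 : ℕ) : ℝ≥0) := by
        rw [hrepr1, hcase, frac_add_one_sub_frac y1]
        push_cast
        ring
      have he2 : y2 + ((⌊t⌋₊ : ℝ≥0) + fScale (1 - μ1) (1 - μ2) s)
          = ((⌊y2⌋₊ + ⌊t⌋₊ + 1 : ℕ) : ℝ≥0) := by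
        rw [hrepr2, hveq, frac_add_one_sub_frac y2]
        push_cast
        ring
      rw [he1, he2, hfl]
      exact regEq_refl _
    · -- crossing an integer boundary
      have hnle : ¬ s ≤ 1 - μ1 := not_le.mpr hcase
      have hsum1 : μ1 + (1 - μ1) = 1 := by rw [hμ1]; exact frac_add_one_sub_frac y1
      have hsum2 : μ2 + (1 - μ2) = 1 := by rw [hμ2]; exact frac_add_one_sub_frac y2
      have hμ2lt : μ2 < 1 := by rw [hμ2]; exact fracPart_lt_one y2
      have hμ1lt1 : μ1 < 1 := by rw [hμ1]; exact fracPart_lt_one y1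
      have hslt1 : s < 1 := by rw [hs]; exact fracPart_lt_one t
      have hcancel : 1 - (1 - μ1) = μ1 := by rw [hμ1]; exact one_sub_one_sub_frac y1
      have hμ1pos : 0 < μ1 := pos_iff_ne_zero.mpr hf1
      have hμ2pos : 0 < μ2 := pos_iff_ne_zero.mpr hf2
      have hvformula : fScale (1 - μ1) (1 - μ2) s = (1 - μ2) + μ2 / μ1 * (s - (1 - μ1)) := by
        have hcancel2 : 1 - (1 - μ2) = μ2 := by rw [hμ2]; exact one_sub_one_sub_frac y2
        rw [fScale_right hnle, hcancel, hcancel2]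
      have hone : (1 : ℝ≥0) < μ1 + s := by
        calc (1 : ℝ≥0) = μ1 + (1 - μ1) := hsum1.symm
          _ < μ1 + s := (add_lt_add_iff_left _).mpr hcase
      obtain ⟨w1, hw1⟩ : ∃ w, μ1 + s = 1 + w :=
        ⟨μ1 + s - 1, (add_tsub_cancel_of_le hone.le).symm⟩
      have hw1pos : (0 : ℝ≥0) < w1 := by
        have := hone
        rw [hw1] at this
        exact (lt_add_iff_pos_right _).mp this
      have hw1lt : w1 < 1 := by
        have h2 : μ1 + s < 1 + 1 := add_lt_add hμ1lt1 hslt1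
        rw [hw1] at h2
        exact (add_lt_add_iff_left _).mp h2
      have hrepr1' : y1 + t = ((⌊y1⌋₊ + ⌊t⌋₊ + 1 : ℕ) : ℝ≥0) + w1 := by
        rw [hrepr1, hw1]
        push_cast
        ring
      have hslt : s - (1 - μ1) < μ1 := by
        have h1 : s - (1 - μ1) < 1 - (1 - μ1) := by
          rw [tsub_lt_tsub_iff_right hcase.le]
          exact hslt1
        rwa [hcancel] at h1
      have hw2pos : (0 : ℝ≥0) < μ2 / μ1 * (s - (1 - μ1)) :=
        mul_pos (div_pos hμ2pos hμ1pos) (tsub_pos_of_lt hcase)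
      have hw2lt : μ2 / μ1 * (s - (1 - μ1)) < 1 := by
        calc μ2 / μ1 * (s - (1 - μ1)) < μ2 / μ1 * μ1 :=
              mul_lt_mul_of_pos_left hslt (div_pos hμ2pos hμ1pos)
          _ = μ2 := div_mul_cancel₀ μ2 hf1
          _ < 1 := hμ2lt
      have hrepr2' : y2 + ((⌊t⌋₊ : ℝ≥0) + fScale (1 - μ1) (1 - μ2) s)
          = ((⌊y2⌋₊ + ⌊t⌋₊ + 1 : ℕ) : ℝ≥0) + μ2 / μ1 * (s - (1 - μ1)) := by
        rw [hrepr2, hvformula, ← add_assoc μ2, hsum2]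
        push_cast
        ring
      have hne1 : fracPart (y1 + t) ≠ 0 := by
        rw [hrepr1', frac_decomp _ _ hw1lt]
        exact hw1pos.ne'
      have hne2 : fracPart (y2 + ((⌊t⌋₊ : ℝ≥0) + fScale (1 - μ1) (1 - μ2) s)) ≠ 0 := by
        rw [hrepr2', frac_decomp _ _ hw2lt]
        exact hw2pos.ne'
      rw [resetStep_of_frac_ne hne1, resetStep_of_frac_ne hne2]
      left
      refine ⟨?_, ?_⟩
      · rw [hrepr1', floor_decomp _ _ hw1lt, hrepr2', floor_decomp _ _ hw2lt, hfl]
      · rw [hrepr1', frac_decomp _ _ hw1lt, hrepr2', frac_decomp _ _ hw2lt]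
        exact ⟨fun c => absurd c hw1pos.ne', fun c => absurd c hw2pos.ne'⟩

lemma regEq_resetStep {K : ℕ} {x1 x2 : ℝ≥0} (h : RegEq K x1 x2) :
    RegEq K (resetStep K x1) (resetStep K x2) := by
  by_cases h1 : ∃ m : ℕ, m ≤ K ∧ x1 = (m : ℝ≥0)
  · by_cases h2 : ∃ m : ℕ, m ≤ K ∧ x2 = (m : ℝ≥0)
    · rw [resetStep, if_pos h1, resetStep, if_pos h2]
      exact regEq_refl 0
    · exfalso
      obtain ⟨m, hm, rfl⟩ := h1
      rcases h with ⟨hfl, hfr⟩ | ⟨hK1, _⟩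
      · have hx2 : fracPart x2 = 0 := hfr.mp (by simp [fracPart])
        have : x2 = (⌊x2⌋₊ : ℝ≥0) := by
          rw [← floor_add_fracPart x2, hx2, add_zero]
          simp [frac_decomp, floor_decomp]
        refine h2 ⟨⌊x2⌋₊, ?_, this⟩
        rw [← hfl]
        simpa using hm
      · exact absurd hK1 (not_lt.mpr (by exact_mod_cast hm))
  · by_cases h2 : ∃ m : ℕ, m ≤ K ∧ x2 = (m : ℝ≥0)
    · exfalso
      obtain ⟨m, hm, rfl⟩ := h2
      rcases h with ⟨hfl, hfr⟩ | ⟨_, hK2⟩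
      · have hx1 : fracPart x1 = 0 := hfr.mpr (by simp [fracPart])
        have : x1 = (⌊x1⌋₊ : ℝ≥0) := by
          rw [← floor_add_fracPart x1, hx1, add_zero]
          simp [frac_decomp, floor_decomp]
        refine h1 ⟨⌊x1⌋₊, ?_, this⟩
        rw [hfl]
        simpa using hm
      · exact absurd hK2 (not_lt.mpr (by exact_mod_cast hm))
    · rw [resetStep, if_neg h1, resetStep, if_neg h2]
      exact h

lemma tauAux_comp {K : ℕ} : ∀ (d : Timestamp) (y1 y2 y3 : ℝ≥0),
    RegEq K y1 y2 → RegEq K y2 y3 →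
    tauAux K y2 y3 (tauAux K y1 y2 d) = tauAux K y1 y3 d := by
  intro d
  induction d with
  | nil => intro _ _ _ _ _; rfl
  | cons t d ih =>
    intro y1 y2 y3 h12 h23
    simp only [tauAux]
    refine congrArg₂ _ (tauStep_comp h12 h23 t) ?_
    rw [tauStep_comp h12 h23 t]
    exact ih _ _ _ (regEq_resetStep_add h12 t)
      (by have := regEq_resetStep_add h23 (tauStep K y1 y2 t)
          rwa [tauStep_comp h12 h23 t] at this)


/-- `τ_{x₂→x₃} ∘ τ_{x₁→x₂} = τ_{x₁→x₃}`. -/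
theorem statement6 (K : ℕ) (x₁ x₂ x₃ : ℝ≥0) (h12 : RegEq K x₁ x₂) (h23 : RegEq K x₂ x₃) :
    ∀ d : Timestamp, tau K x₂ x₃ (tau K x₁ x₂ d) = tau K x₁ x₃ d := by
  intro d
  exact tauAux_comp d _ _ _ (regEq_resetStep h12) (regEq_resetStep h23)

end IRTA
end

section
/- Let B be a K-acceptor, q a control state of B, and x, x' ∈ ℝ≥0 with x ≡^K x'. Then for every timed word w: w ∈ L(q, x) if and only if τ_{x→x'}(w) ∈ L(q, x'), where L(q, ν) is the set of timed words admitting a run of B from configuration (q, ν) to a final state. -/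
open scoped NNReal Classical

namespace IRTA

lemma fracPart_eq_zero_iff (x : ℝ≥0) : fracPart x = 0 ↔ IsNatVal x := by
  constructor
  · intro h
    refine ⟨⌊x⌋₊, ?_⟩
    have hx := floor_add_fracPart x
    rw [h, add_zero] at hx
    exact hx.symm
  · rintro ⟨m, rfl⟩
    simp [fracPart]

lemma decompose (n : ℕ) (e : ℝ≥0) (h1 : e < 1) :
    ⌊(n : ℝ≥0) + e⌋₊ = n ∧ fracPart ((n : ℝ≥0) + e) = e := by
  have hf : ⌊(n : ℝ≥0) + e⌋₊ = n := by
    rw [Nat.floor_eq_iff (zero_le : (0 : ℝ≥0) ≤ (n : ℝ≥0) + e)]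
    exact ⟨le_self_add, by exact add_lt_add_right h1 _⟩
  exact ⟨hf, by rw [fracPart, hf, add_tsub_cancel_left]⟩

lemma floor_lt_of_frac_ne {v : ℝ≥0} (h : fracPart v ≠ 0) : (⌊v⌋₊ : ℝ≥0) < v := by
  conv_rhs => rw [← floor_add_fracPart v]
  exact lt_add_of_pos_right _ (pos_iff_ne_zero.2 h)

lemma gt_of_floor_eq {K : ℕ} {u v : ℝ≥0} (hfl : ⌊u⌋₊ = ⌊v⌋₊)
    (hv : fracPart v ≠ 0) (h : (K : ℝ≥0) < u) : (K : ℝ≥0) < v := by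
  have h1 : K ≤ ⌊u⌋₊ := by
    have h2 : (K : ℝ≥0) < (⌊u⌋₊ : ℝ≥0) + 1 := h.trans (Nat.lt_floor_add_one u)
    have h3 : K < ⌊u⌋₊ + 1 := by exact_mod_cast h2
    omega
  calc (K : ℝ≥0) ≤ (⌊v⌋₊ : ℝ≥0) := by exact_mod_cast hfl ▸ h1
    _ < v := floor_lt_of_frac_ne hv

lemma le_of_floor_eq {K : ℕ} {u v : ℝ≥0} (hfl : ⌊u⌋₊ = ⌊v⌋₊)
    (hu : fracPart u ≠ 0) (hv : fracPart v ≠ 0) (h : u ≤ (K : ℝ≥0)) : v ≤ (K : ℝ≥0) := by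
  by_contra hc
  exact absurd (gt_of_floor_eq hfl.symm hu (not_le.1 hc)) (not_lt.2 h)

lemma resetStep_self_of_frac_ne (K : ℕ) {v : ℝ≥0} (h : fracPart v ≠ 0) :
    resetStep K v = v := by
  rw [resetStep, if_neg]
  rintro ⟨m, -, rfl⟩
  exact h ((fracPart_eq_zero_iff _).2 ⟨m, rfl⟩)

lemma resetStep_self_of_gt (K : ℕ) {v : ℝ≥0} (h : (K : ℝ≥0) < v) : resetStep K v = v := by
  rw [resetStep, if_neg]
  rintro ⟨m, hm, rfl⟩
  exact absurd h (not_lt.2 (by exact_mod_cast hm))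

lemma tauStep_gt (K : ℕ) {y y' : ℝ≥0} (h : (K : ℝ≥0) < y) (h' : (K : ℝ≥0) < y')
    (t : ℝ≥0) : tauStep K y y' t = t := by
  rw [tauStep, if_pos (Or.inr ⟨h, h'⟩)]

lemma tauStep_self (K : ℕ) (y t : ℝ≥0) : tauStep K y y t = t := by
  rw [tauStep]
  split_ifs with h
  · rfl
  · have hy : ¬ IsNatVal y := fun hn => h (Or.inl ⟨hn, hn⟩)
    have ha : fracPart y ≠ 0 := fun h0 => hy ((fracPart_eq_zero_iff _).1 h0)
    have hlam : (0 : ℝ≥0) < 1 - fracPart y := tsub_pos_of_lt (fracPart_lt_one y)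
    rw [fScale]
    split_ifs with hs
    · rw [div_self hlam.ne', one_mul, floor_add_fracPart]
    · have h1 : (1 : ℝ≥0) - (1 - fracPart y) = fracPart y :=
        tsub_tsub_cancel_of_le (fracPart_lt_one y).le
      rw [h1, div_self ha, one_mul, add_tsub_cancel_of_le (le_of_not_ge hs),
        floor_add_fracPart]

/-- The invariant relating the two clock values and the two `c^K`-accumulators. -/
def Inv (K : ℕ) (ν ν' y y' : ℝ≥0) : Prop :=
  (ν = ν' ∧ y = y') ∨
  ((K : ℝ≥0) < ν ∧ (K : ℝ≥0) < ν' ∧ (K : ℝ≥0) < y ∧ (K : ℝ≥0) < y') ∨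
  (∃ c : ℕ, ν = y + c ∧ ν' = y' + c ∧ ⌊y⌋₊ = ⌊y'⌋₊ ∧
    fracPart y ≠ 0 ∧ fracPart y' ≠ 0 ∧ y ≤ (K : ℝ≥0) ∧ y' ≤ (K : ℝ≥0))

lemma dichotomy (K : ℕ) (ν ν' y y' t : ℝ≥0) (h : Inv K ν ν' y y') :
    (ν + t = ν' + tauStep K y y' t ∧ y + t = y' + tauStep K y y' t) ∨
    ((K : ℝ≥0) < ν + t ∧ (K : ℝ≥0) < ν' + tauStep K y y' t ∧ (K : ℝ≥0) < y + t ∧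
      (K : ℝ≥0) < y' + tauStep K y y' t) ∨
    (∃ M : ℕ, (M : ℝ≥0) < ν + t ∧ ν + t < (M : ℝ≥0) + 1 ∧
      (M : ℝ≥0) < ν' + tauStep K y y' t ∧ ν' + tauStep K y y' t < (M : ℝ≥0) + 1 ∧
      ∃ c : ℕ, ν + t = (y + t) + c ∧
        ν' + tauStep K y y' t = (y' + tauStep K y y' t) + c ∧
        ⌊y + t⌋₊ = ⌊y' + tauStep K y y' t⌋₊ ∧ fracPart (y + t) ≠ 0 ∧
        fracPart (y' + tauStep K y y' t) ≠ 0) := by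
  rcases h with ⟨hv, hy⟩ | ⟨h1, h2, h3, h4⟩ | ⟨c, hv, hv', hfl, ha, ha', hle, hle'⟩
  · subst hv; subst hy
    exact Or.inl ⟨by rw [tauStep_self], by rw [tauStep_self]⟩
  · rw [tauStep_gt K h3 h4]
    exact Or.inr (Or.inl ⟨lt_of_lt_of_le h1 le_self_add, lt_of_lt_of_le h2 le_self_add,
      lt_of_lt_of_le h3 le_self_add, lt_of_lt_of_le h4 le_self_add⟩)
  · -- the interesting case
    subst hv; subst hv'
    set a := fracPart y with hadef
    set a' := fracPart y' with ha'def
    set s := fracPart t with hsdef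
    have hyd : y = (⌊y⌋₊ : ℝ≥0) + a := (floor_add_fracPart y).symm
    have hy'd : y' = (⌊y⌋₊ : ℝ≥0) + a' := by rw [hfl]; exact (floor_add_fracPart y').symm
    have htd : t = (⌊t⌋₊ : ℝ≥0) + s := (floor_add_fracPart t).symm
    have ha1 : a < 1 := fracPart_lt_one y
    have ha'1 : a' < 1 := fracPart_lt_one y'
    have ha0 : 0 < a := pos_iff_ne_zero.2 ha
    have ha'0 : 0 < a' := pos_iff_ne_zero.2 ha'
    have hs1 : s < 1 := fracPart_lt_one t
    have ht' : tauStep K y y' t = (⌊t⌋₊ : ℝ≥0) + fScale (1 - a) (1 - a') s := by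
      rw [tauStep, if_neg]
      rintro (⟨hn, -⟩ | ⟨hK, -⟩)
      · exact ha ((fracPart_eq_zero_iff _).2 hn)
      · exact absurd hK (not_lt.2 hle)
    set lam := (1 : ℝ≥0) - a with hlamdef
    set lam' := (1 : ℝ≥0) - a' with hlam'def
    have hlam0 : (0 : ℝ≥0) < lam := tsub_pos_of_lt ha1
    have hlam'0 : (0 : ℝ≥0) < lam' := tsub_pos_of_lt ha'1
    have halam : a + lam = 1 := add_tsub_cancel_of_le ha1.le
    have ha'lam' : a' + lam' = 1 := add_tsub_cancel_of_le ha'1.le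
    set F := ⌊y⌋₊
    set T := ⌊t⌋₊
    rcases lt_trichotomy s lam with hsl | hsl | hsl
    · -- s < lam : both stay in the same open interval (F+c+T, F+c+T+1)
      have hf : fScale lam lam' s = (lam' / lam) * s := by rw [fScale, if_pos hsl.le]
      set f := (lam' / lam) * s with hfdef
      have hflt : f < lam' := by
        calc f < (lam' / lam) * lam :=
              mul_lt_mul_of_pos_left hsl (div_pos hlam'0 hlam0)
          _ = lam' := div_mul_cancel₀ _ hlam0.ne'
      have has1 : a + s < 1 := by rw [← halam]; exact add_lt_add_right hsl _
      have ha'f1 : a' + f < 1 := by rw [← ha'lam']; exact add_lt_add_right hflt _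
      have has0 : 0 < a + s := lt_of_lt_of_le ha0 le_self_add
      have ha'f0 : 0 < a' + f := lt_of_lt_of_le ha'0 le_self_add
      have hv : y + c + t = ((F + c + T : ℕ) : ℝ≥0) + (a + s) := by
        rw [hyd, htd]; push_cast; ring
      have hv' : y' + c + tauStep K y y' t = ((F + c + T : ℕ) : ℝ≥0) + (a' + f) := by
        rw [ht', hf, hy'd]; push_cast; ring
      have hyt : y + t = ((F + T : ℕ) : ℝ≥0) + (a + s) := by
        rw [hyd, htd]; push_cast; ring
      have hy't' : y' + tauStep K y y' t = ((F + T : ℕ) : ℝ≥0) + (a' + f) := by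
        rw [ht', hf, hy'd]; push_cast; ring
      refine Or.inr (Or.inr ⟨F + c + T, ?_, ?_, ?_, ?_, c, by ring, by ring, ?_, ?_, ?_⟩)
      · rw [hv]; exact lt_add_of_pos_right _ has0
      · rw [hv]; push_cast; exact add_lt_add_right has1 _
      · rw [hv']; exact lt_add_of_pos_right _ ha'f0
      · rw [hv']; push_cast; exact add_lt_add_right ha'f1 _
      · rw [hyt, hy't', (decompose _ _ has1).1, (decompose _ _ ha'f1).1]
      · rw [hyt, (decompose _ _ has1).2]; exact has0.ne'
      · rw [hy't', (decompose _ _ ha'f1).2]; exact ha'f0.ne'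
    · -- s = lam : both values are the integer F+c+T+1
      have hf : fScale lam lam' s = lam' := by
        rw [fScale, if_pos hsl.le, hsl, div_mul_cancel₀ _ hlam0.ne']
      have e1 : a + s = a' + lam' := by rw [hsl, halam, ha'lam']
      refine Or.inl ⟨?_, ?_⟩
      · rw [ht', hf, hyd, hy'd, htd]
        calc ((F : ℝ≥0) + a) + c + ((T : ℝ≥0) + s) = (F : ℝ≥0) + c + T + (a + s) := by ring
          _ = (F : ℝ≥0) + c + T + (a' + lam') := by rw [e1]
          _ = ((F : ℝ≥0) + a') + c + ((T : ℝ≥0) + lam') := by ring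
      · rw [ht', hf, hyd, hy'd, htd]
        calc ((F : ℝ≥0) + a) + ((T : ℝ≥0) + s) = (F : ℝ≥0) + T + (a + s) := by ring
          _ = (F : ℝ≥0) + T + (a' + lam') := by rw [e1]
          _ = ((F : ℝ≥0) + a') + ((T : ℝ≥0) + lam') := by ring
    · -- lam < s : both in the open interval (F+c+T+1, F+c+T+2)
      have hf : fScale lam lam' s = lam' + (a' / a) * (s - lam) := by
        rw [fScale, if_neg (not_le.2 hsl), hlamdef, hlam'def,
          tsub_tsub_cancel_of_le ha1.le, tsub_tsub_cancel_of_le ha'1.le]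
      set g := (a' / a) * (s - lam) with hgdef
      have hsl2 : s - lam < a := by
        have h2 : s < a + lam := by rw [halam]; exact hs1
        exact (tsub_lt_iff_right hsl.le).2 h2
      have hg0 : 0 < g := mul_pos (div_pos ha'0 ha0) (tsub_pos_of_lt hsl)
      have hga' : g < a' := by
        calc g < (a' / a) * a := mul_lt_mul_of_pos_left hsl2 (div_pos ha'0 ha0)
          _ = a' := div_mul_cancel₀ _ ha0.ne'
      have has1 : 1 < a + s := by rw [← halam]; exact add_lt_add_right hsl _
      have e : a + s = 1 + ((a + s) - 1) := (add_tsub_cancel_of_le has1.le).symm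
      set ee := (a + s) - 1 with heedef
      have hee0 : 0 < ee := tsub_pos_of_lt has1
      have hee1 : ee < 1 := by
        rw [heedef, tsub_lt_iff_left has1.le]
        exact add_lt_add ha1 hs1
      have e' : a' + (lam' + g) = 1 + g := by rw [← add_assoc, ha'lam']
      have hg1 : g < 1 := hga'.trans ha'1
      have hv : y + c + t = ((F + c + T + 1 : ℕ) : ℝ≥0) + ee := by
        rw [hyd, htd]
        calc ((F : ℝ≥0) + a) + c + ((T : ℝ≥0) + s) = (F : ℝ≥0) + c + T + (a + s) := by ring
          _ = (F : ℝ≥0) + c + T + (1 + ee) := by rw [← e]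
          _ = ((F + c + T + 1 : ℕ) : ℝ≥0) + ee := by push_cast; ring
      have hv' : y' + c + tauStep K y y' t = ((F + c + T + 1 : ℕ) : ℝ≥0) + g := by
        rw [ht', hf, hy'd]
        calc ((F : ℝ≥0) + a') + c + ((T : ℝ≥0) + (lam' + g))
            = (F : ℝ≥0) + c + T + (a' + (lam' + g)) := by ring
          _ = (F : ℝ≥0) + c + T + (1 + g) := by rw [e']
          _ = ((F + c + T + 1 : ℕ) : ℝ≥0) + g := by push_cast; ring
      have hyt : y + t = ((F + T + 1 : ℕ) : ℝ≥0) + ee := by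
        rw [hyd, htd]
        calc ((F : ℝ≥0) + a) + ((T : ℝ≥0) + s) = (F : ℝ≥0) + T + (a + s) := by ring
          _ = (F : ℝ≥0) + T + (1 + ee) := by rw [← e]
          _ = ((F + T + 1 : ℕ) : ℝ≥0) + ee := by push_cast; ring
      have hy't' : y' + tauStep K y y' t = ((F + T + 1 : ℕ) : ℝ≥0) + g := by
        rw [ht', hf, hy'd]
        calc ((F : ℝ≥0) + a') + ((T : ℝ≥0) + (lam' + g))
            = (F : ℝ≥0) + T + (a' + (lam' + g)) := by ring
          _ = (F : ℝ≥0) + T + (1 + g) := by rw [e']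
          _ = ((F + T + 1 : ℕ) : ℝ≥0) + g := by push_cast; ring
      refine Or.inr (Or.inr ⟨F + c + T + 1, ?_, ?_, ?_, ?_, c, by ring, by ring, ?_, ?_, ?_⟩)
      · rw [hv]; exact lt_add_of_pos_right _ hee0
      · rw [hv]; push_cast; exact add_lt_add_right hee1 _
      · rw [hv']; exact lt_add_of_pos_right _ hg0
      · rw [hv']; push_cast; exact add_lt_add_right hg1 _
      · rw [hyt, hy't', (decompose _ _ hee1).1, (decompose _ _ hg1).1]
      · rw [hyt, (decompose _ _ hee1).2]; exact hee0.ne'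
      · rw [hy't', (decompose _ _ hg1).2]; exact hg0.ne'

lemma step (K : ℕ) {ν ν' y y' : ℝ≥0} (h : Inv K ν ν' y y') (t : ℝ≥0) :
    (∀ φ : CC, StrictGuard K φ → φ.maxConst ≤ K →
      (φ.sat (ν + t) ↔ φ.sat (ν' + tauStep K y y' t))) ∧
    Inv K (ν + t) (ν' + tauStep K y y' t)
      (resetStep K (y + t)) (resetStep K (y' + tauStep K y y' t)) ∧
    (∀ m : ℕ, m ≤ K → ν + t = (m : ℝ≥0) →
      Inv K 0 0 (resetStep K (y + t)) (resetStep K (y' + tauStep K y y' t))) := by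
  rcases dichotomy K ν ν' y y' t h with ⟨hvv, hyy⟩ | ⟨h1, h2, h3, h4⟩ |
    ⟨M, hM1, hM2, hM3, hM4, c, hc, hc', hfl, hfr, hfr'⟩
  · refine ⟨fun φ _ _ => by rw [hvv], Or.inl ⟨hvv, by rw [hyy]⟩,
      fun m _ _ => Or.inl ⟨rfl, by rw [hyy]⟩⟩
  · refine ⟨?_, ?_, ?_⟩
    · rintro φ (⟨m, rfl⟩ | ⟨m, rfl⟩ | rfl) hm
      · have hmK : (m : ℝ≥0) ≤ (K : ℝ≥0) := by exact_mod_cast hm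
        have gen : ∀ u : ℝ≥0, (K : ℝ≥0) < u → ¬ (CC.eq m).sat u := by
          intro u hu he
          have he' : u = (m : ℝ≥0) := he
          exact absurd (he' ▸ hu) (not_lt.2 hmK)
        exact iff_of_false (gen _ h1) (gen _ h2)
      · have hmK : m + 1 ≤ K := le_of_max_le_right hm
        have hcast : (((m + 1 : ℕ)) : ℝ≥0) ≤ (K : ℝ≥0) := by exact_mod_cast hmK
        have gen : ∀ u : ℝ≥0, (K : ℝ≥0) < u →
            ¬ ((CC.gt m).and (CC.lt (m + 1))).sat u := by
          intro u hu he
          have hlt : u < (((m + 1 : ℕ)) : ℝ≥0) := he.2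
          exact absurd hu (not_lt.2 (hlt.le.trans hcast))
        exact iff_of_false (gen _ h1) (gen _ h2)
      · exact iff_of_true h1 h2
    · rw [resetStep_self_of_gt K h3, resetStep_self_of_gt K h4]
      exact Or.inr (Or.inl ⟨h1, h2, h3, h4⟩)
    · intro m hm hv
      have : (m : ℝ≥0) ≤ K := by exact_mod_cast hm
      exact absurd (hv ▸ h1) (not_lt.2 this)
  · -- interval case
    have hMcast : ∀ u : ℝ≥0, u < (M : ℝ≥0) + 1 → ∀ m : ℕ, (m : ℝ≥0) < u → m ≤ M := by
      intro u hu m hmu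
      have : (m : ℝ≥0) < (M : ℝ≥0) + 1 := hmu.trans hu
      have : m < M + 1 := by exact_mod_cast this
      omega
    have hne : ∀ u : ℝ≥0, (M : ℝ≥0) < u → u < (M : ℝ≥0) + 1 → ∀ m : ℕ, u ≠ (m : ℝ≥0) := by
      intro u h1 h2 m he
      subst he
      have hl : M < m := by exact_mod_cast h1
      have hr : (m : ℝ≥0) < ((M + 1 : ℕ) : ℝ≥0) := by push_cast; exact h2
      have hr' : m < M + 1 := by exact_mod_cast hr
      omega
    refine ⟨?_, ?_, ?_⟩
    · rintro φ (⟨m, rfl⟩ | ⟨m, rfl⟩ | rfl) hm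
      · exact iff_of_false (hne _ hM1 hM2 m) (hne _ hM3 hM4 m)
      · have gen : ∀ u : ℝ≥0, (M : ℝ≥0) < u → u < (M : ℝ≥0) + 1 →
            (((CC.gt m).and (CC.lt (m + 1))).sat u ↔ m = M) := by
          intro u h1 h2
          constructor
          · rintro he
            have hgt : (m : ℝ≥0) < u := he.1
            have hlt : u < (((m + 1 : ℕ)) : ℝ≥0) := he.2
            have hlt' : u < (m : ℝ≥0) + 1 := by push_cast at hlt; exact hlt
            have hmM : m ≤ M := hMcast u h2 m hgt
            have hMm : M ≤ m := by
              have : (M : ℝ≥0) < (m : ℝ≥0) + 1 := h1.trans hlt'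
              have : M < m + 1 := by exact_mod_cast this
              omega
            omega
          · rintro rfl
            exact ⟨h1, by rw [CC.sat]; push_cast; exact h2⟩
        rw [gen _ hM1 hM2, gen _ hM3 hM4]
      · have key : ∀ u : ℝ≥0, (M : ℝ≥0) < u → u < (M : ℝ≥0) + 1 →
            (((K : ℝ≥0) < u) ↔ K ≤ M) := by
          intro u h1 h2
          constructor
          · intro hK
            exact hMcast u h2 K hK
          · intro hK
            exact lt_of_le_of_lt (by exact_mod_cast hK) h1
        rw [CC.sat, CC.sat, key _ hM1 hM2, key _ hM3 hM4]
    · rw [resetStep_self_of_frac_ne K hfr, resetStep_self_of_frac_ne K hfr']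
      by_cases hgt : (K : ℝ≥0) < y + t
      · have hgt' : (K : ℝ≥0) < y' + tauStep K y y' t := gt_of_floor_eq hfl hfr' hgt
        exact Or.inr (Or.inl ⟨lt_of_lt_of_le hgt (hc ▸ le_self_add),
          lt_of_lt_of_le hgt' (hc' ▸ le_self_add), hgt, hgt'⟩)
      · have hle : y + t ≤ K := not_lt.1 hgt
        have hle' : y' + tauStep K y y' t ≤ K := le_of_floor_eq hfl hfr hfr' hle
        exact Or.inr (Or.inr ⟨c, hc, hc', hfl, hfr, hfr', hle, hle'⟩)
    · intro m hm hv
      exact absurd hv (hne _ hM1 hM2 m)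

lemma steps_nil_inv {A : Type} {M : TA A} {c c' : M.Q × ℝ≥0}
    (h : Steps M c [] c') : c' = c := by
  cases h; rfl

lemma steps_cons_inv {A : Type} {M : TA A} {q : M.Q} {ν t : ℝ≥0} {a : A}
    {w : TimedWord A} {c : M.Q × ℝ≥0} (h : Steps M (q, ν) ((t, a) :: w) c) :
    ∃ θ ∈ M.trans, θ.src = q ∧ θ.lab = a ∧ θ.guard.sat (ν + t) ∧
      Steps M (θ.dst, if θ.reset then 0 else ν + t) w c := by
  cases h with
  | cons θ hθ hsrc hlab hg hrest => exact ⟨θ, hθ, hsrc, hlab, hg, hrest⟩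

lemma key_lemma {A : Type} (K : ℕ) (B : TA A) (hS : B.IsStrict K) (hM : B.MaxConstLE K) :
    ∀ (w : TimedWord A) (q : B.Q) (ν ν' y y' : ℝ≥0), Inv K ν ν' y y' →
      ((∃ p μ, Steps B (q, ν) w (p, μ) ∧ p ∈ B.final) ↔
       (∃ p μ, Steps B (q, ν') (tauWAux K y y' w) (p, μ) ∧ p ∈ B.final)) := by
  intro w
  induction w with
  | nil =>
    intro q ν ν' y y' _
    simp only [tauWAux]
    constructor
    · rintro ⟨p, μ, hs, hp⟩
      obtain ⟨h1, h2⟩ := Prod.mk.injEq .. ▸ steps_nil_inv hs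
      exact ⟨q, ν', Steps.nil _, h1 ▸ hp⟩
    · rintro ⟨p, μ, hs, hp⟩
      obtain ⟨h1, h2⟩ := Prod.mk.injEq .. ▸ steps_nil_inv hs
      exact ⟨q, ν, Steps.nil _, h1 ▸ hp⟩
  | cons x w ih =>
    obtain ⟨t, a⟩ := x
    intro q ν ν' y y' h
    obtain ⟨hsat, hInv, hReset⟩ := step K h t
    simp only [tauWAux]
    constructor
    · rintro ⟨p, μ, hs, hp⟩
      obtain ⟨θ, hθ, hsrc, hlab, hg, hrest⟩ := steps_cons_inv hs
      have hg' : θ.guard.sat (ν' + tauStep K y y' t) :=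
        (hsat θ.guard (hS θ hθ).1 (hM θ hθ)).1 hg
      by_cases hr : θ.reset = true
      · obtain ⟨m, hguard⟩ := (hS θ hθ).2.2 hr
        have hmK : m ≤ K := by have := hM θ hθ; rw [hguard] at this; exact this
        have hvm : ν + t = (m : ℝ≥0) := by rw [hguard] at hg; exact hg
        have hInv0 := hReset m hmK hvm
        rw [hr, if_pos rfl] at hrest
        obtain ⟨p', μ', hs', hp'⟩ := (ih θ.dst 0 0 _ _ hInv0).1 ⟨p, μ, hrest, hp⟩
        exact ⟨p', μ', Steps.cons θ hθ hsrc hlab hg'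
          (by rw [hr, if_pos rfl]; exact hs'), hp'⟩
      · rw [if_neg hr] at hrest
        obtain ⟨p', μ', hs', hp'⟩ := (ih θ.dst _ _ _ _ hInv).1 ⟨p, μ, hrest, hp⟩
        exact ⟨p', μ', Steps.cons θ hθ hsrc hlab hg'
          (by rw [if_neg hr]; exact hs'), hp'⟩
    · rintro ⟨p, μ, hs, hp⟩
      obtain ⟨θ, hθ, hsrc, hlab, hg', hrest⟩ := steps_cons_inv hs
      have hg : θ.guard.sat (ν + t) :=
        (hsat θ.guard (hS θ hθ).1 (hM θ hθ)).2 hg'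
      by_cases hr : θ.reset = true
      · obtain ⟨m, hguard⟩ := (hS θ hθ).2.2 hr
        have hmK : m ≤ K := by have := hM θ hθ; rw [hguard] at this; exact this
        have hvm : ν + t = (m : ℝ≥0) := by rw [hguard] at hg; exact hg
        have hInv0 := hReset m hmK hvm
        rw [hr, if_pos rfl] at hrest
        obtain ⟨p', μ', hs', hp'⟩ := (ih θ.dst 0 0 _ _ hInv0).2 ⟨p, μ, hrest, hp⟩
        exact ⟨p', μ', Steps.cons θ hθ hsrc hlab hg
          (by rw [hr, if_pos rfl]; exact hs'), hp'⟩
      · rw [if_neg hr] at hrest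
        obtain ⟨p', μ', hs', hp'⟩ := (ih θ.dst _ _ _ _ hInv).2 ⟨p, μ, hrest, hp⟩
        exact ⟨p', μ', Steps.cons θ hθ hsrc hlab hg
          (by rw [if_neg hr]; exact hs'), hp'⟩

/-- for a `K`-acceptor, `w ∈ L(q,x)` iff `τ_{x→x'}(w) ∈ L(q,x')`. -/
theorem statement7 {A : Type} [Finite A] (K : ℕ) (B : TA A) (hB : IsKAcceptor B K)
    (q : B.Q) (x x' : ℝ≥0) (hxx' : RegEq K x x') :
    ∀ w : TimedWord A, w ∈ B.LangFrom (q, x) ↔ tauW K x x' w ∈ B.LangFrom (q, x') := by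
  intro w
  obtain ⟨-, -, -, -, hS, hM, -⟩ := hB
  have h0 : Inv K x x' (resetStep K x) (resetStep K x') := by
    rcases hxx' with ⟨hfl, hfr⟩ | ⟨h1, h2⟩
    · by_cases hx : fracPart x = 0
      · have hx' : fracPart x' = 0 := hfr.1 hx
        have hxx : x = x' := by
          rw [← floor_add_fracPart x, ← floor_add_fracPart x', hfl, hx, hx']
        exact Or.inl ⟨hxx, by rw [hxx]⟩
      · have hx' : fracPart x' ≠ 0 := fun h => hx (hfr.2 h)
        rw [resetStep_self_of_frac_ne _ hx, resetStep_self_of_frac_ne _ hx']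
        by_cases hK : (K : ℝ≥0) < x
        · have hK' : (K : ℝ≥0) < x' := gt_of_floor_eq hfl hx' hK
          exact Or.inr (Or.inl ⟨hK, hK', hK, hK'⟩)
        · have hle : x ≤ (K : ℝ≥0) := not_lt.1 hK
          have hle' : x' ≤ (K : ℝ≥0) := le_of_floor_eq hfl hx hx' hle
          exact Or.inr (Or.inr ⟨0, by simp, by simp, hfl, hx, hx', hle, hle'⟩)
    · rw [resetStep_self_of_gt _ h1, resetStep_self_of_gt _ h2]
      exact Or.inr (Or.inl ⟨h1, h2, h1, h2⟩)
  have hk := key_lemma K B hS hM w q x x' (resetStep K x) (resetStep K x') h0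
  simp only [TA.LangFrom, tauW, Set.mem_setOf_eq]
  exact hk

end IRTA
end
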